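/- Let r ∈ ℂ, let a : ℕ → ℂ be a sequence, and let b := T_r a. Then in the ring of formal power series ℂ[[z]] one has the identity (1 − r z) · ∑_{n≥0} b_n z^n = ∑_{k≥0} a_k z^k (1 − r z)^{−k}; equivalently, the ordinary generating function of b equals (1 − r z)^{−1} · A(z/(1 − r z)) where A is the ordinary generating function of a and the substitution z ↦ z/(1 − r z) is the formal substitution of a power series with zero constant term. -/

import Mathlib

open PowerSeries

lemma aux_inv (r : ℂ) :
    (1 - PowerSeries.C (R := ℂ) r * PowerSeries.X)⁻¹ = PowerSeries.rescale r (PowerSeries.mk 1) := by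
  have h1 : (1 : ℂ⟦X⟧) - PowerSeries.C (R := ℂ) r * PowerSeries.X = PowerSeries.rescale r (1 - X) := by
    rw [map_sub, map_one, rescale_X]
  rw [eq_comm, PowerSeries.eq_inv_iff_mul_eq_one]
  · rw [h1, ← map_mul, mk_one_mul_one_sub_eq_one, map_one]
  · simp

lemma aux_arith (r : ℂ) (a : ℕ → ℂ) (m : ℕ) :
    (∑ k ∈ Finset.range (m + 2), ((m + 1).choose k : ℂ) * r ^ (m + 1 - k) * a k)
      - r * ∑ k ∈ Finset.range (m + 1), (m.choose k : ℂ) * r ^ (m - k) * a k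
    = ∑ j ∈ Finset.range (m + 1), a (j + 1) * (r ^ (m - j) * (m.choose j : ℂ)) := by
  have h2 : r * ∑ k ∈ Finset.range (m + 1), (m.choose k : ℂ) * r ^ (m - k) * a k
      = ∑ k ∈ Finset.range (m + 1), (m.choose k : ℂ) * r ^ (m + 1 - k) * a k := by
    rw [Finset.mul_sum]
    refine Finset.sum_congr rfl fun k hk => ?_
    have hk' : k ≤ m := Nat.lt_succ_iff.mp (Finset.mem_range.mp hk)
    have : m + 1 - k = (m - k) + 1 := by omega
    rw [this, pow_succ]
    ring
  rw [h2,
    Finset.sum_range_succ' (fun k => ((m + 1).choose k : ℂ) * r ^ (m + 1 - k) * a k) (m + 1),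
    Finset.sum_range_succ' (fun k => ((m).choose k : ℂ) * r ^ (m + 1 - k) * a k) m]
  have h6 : ∑ k ∈ Finset.range m, ((m).choose (k + 1) : ℂ) * r ^ (m + 1 - (k + 1)) * a (k + 1)
      = ∑ k ∈ Finset.range (m + 1),
          ((m).choose (k + 1) : ℂ) * r ^ (m + 1 - (k + 1)) * a (k + 1) := by
    rw [Finset.sum_range_succ, Nat.choose_succ_self]
    simp
  rw [h6, add_sub_add_comm, ← Finset.sum_sub_distrib]
  have e0 : (((m + 1).choose 0 : ℂ)) * r ^ (m + 1 - 0) * a 0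
      - ((m.choose 0 : ℂ)) * r ^ (m + 1 - 0) * a 0 = 0 := by simp
  rw [e0, add_zero]
  refine Finset.sum_congr rfl fun j hj => ?_
  have h3 : m + 1 - (j + 1) = m - j := by omega
  have h4 : ((m + 1).choose (j + 1) : ℂ) = (m.choose j : ℂ) + (m.choose (j + 1) : ℂ) := by
    rw [Nat.choose_succ_succ]; push_cast; ring
  rw [h3, h4]
  ring

theorem ogf_binomial_convolution (r : ℂ) (a b : ℕ → ℂ)
    (hb : ∀ n, b n = ∑ k ∈ Finset.range (n + 1), (n.choose k : ℂ) * r ^ (n - k) * a k)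
    (n : ℕ) :
    PowerSeries.coeff (R := ℂ) n ((1 - PowerSeries.C (R := ℂ) r * PowerSeries.X) * PowerSeries.mk b) =
      PowerSeries.coeff (R := ℂ) n (∑ k ∈ Finset.range (n + 1),
        PowerSeries.C (R := ℂ) (a k) *
          (PowerSeries.X * (1 - PowerSeries.C (R := ℂ) r * PowerSeries.X)⁻¹) ^ k) := by
  -- rewrite RHS coefficientwise
  have hterm : ∀ k ∈ Finset.range (n + 1),
      PowerSeries.coeff (R := ℂ) n (PowerSeries.C (R := ℂ) (a k) *
        (PowerSeries.X * (1 - PowerSeries.C (R := ℂ) r * PowerSeries.X)⁻¹) ^ k)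
      = a k * PowerSeries.coeff (R := ℂ) (n - k)
          ((PowerSeries.rescale r ((PowerSeries.mk 1 : ℂ⟦X⟧) ^ k))) := by
    intro k hk
    have hk' : k ≤ n := Nat.lt_succ_iff.mp (Finset.mem_range.mp hk)
    rw [aux_inv, mul_pow, ← map_pow, coeff_C_mul, coeff_X_pow_mul' ]
    rw [if_pos hk']
  rw [map_sum, Finset.sum_congr rfl hterm]
  -- compute coefficients of (mk 1)^k
  have hpow : ∀ k, 0 < k → ∀ m : ℕ,
      PowerSeries.coeff (R := ℂ) m ((PowerSeries.mk 1 : ℂ⟦X⟧) ^ k) = ((k - 1 + m).choose (k - 1) : ℂ) := by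
    intro k hk m
    obtain ⟨d, rfl⟩ := Nat.exists_eq_add_of_lt hk
    simp only [zero_add, mk_one_pow_eq_mk_choose_add, coeff_mk, Nat.add_sub_cancel]
  rcases n with _ | m
  · simp [hb 0]
  · -- LHS
    have hL : PowerSeries.coeff (R := ℂ) (m + 1)
        ((1 - PowerSeries.C (R := ℂ) r * PowerSeries.X) * PowerSeries.mk b)
        = b (m + 1) - r * b m := by
      rw [sub_mul, one_mul, map_sub, coeff_mk, mul_assoc, coeff_C_mul, coeff_succ_X_mul, coeff_mk]
    rw [hL, hb, hb, aux_arith]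
    rw [Finset.sum_range_succ' _ (m + 1)]
    have hz : a 0 * (PowerSeries.coeff (R := ℂ) (m + 1 - 0))
        (PowerSeries.rescale r ((PowerSeries.mk 1 : ℂ⟦X⟧) ^ 0)) = 0 := by
      simp [coeff_rescale, coeff_one]
    rw [hz, add_zero]
    refine Finset.sum_congr rfl fun j hj => ?_
    have hj' : j ≤ m := Nat.lt_succ_iff.mp (Finset.mem_range.mp hj)
    rw [coeff_rescale, hpow (j + 1) (Nat.succ_pos j)]
    have : j + 1 - 1 + (m + 1 - (j + 1)) = m := by omega
    rw [this]
    have h5 : m + 1 - (j + 1) = m - j := by omega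
    rw [h5, Nat.add_sub_cancel]
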